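/- arXiv:1306.3969 — 4 statements merged into one kernel-verified Lean document; each statement's English description precedes it below -/
import Mathlib

section
/- Let A, B be Hermitian positive semidefinite matrices and M Hermitian positive definite. Then the second derivative of δ ↦ tr((M + δB)^{-1} A) at δ = 0 equals 2·tr((B M^{-1} B)(M^{-1} A M^{-1})), which is nonnegative. Hence δ ↦ tr((M+δB)^{-1}A) is convex for δ ≥ 0. -/
open ComplexOrder Matrix

section Aux

attribute [local instance] Matrix.linftyOpNormedRing Matrix.linftyOpNormedAlgebra

variable {n : ℕ}

local notation "Mx" => Matrix (Fin n) (Fin n) ℂ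

/-- Trace of a PSD matrix is nonnegative. -/
lemma aux_trace_nonneg {P : Mx} (hP : P.PosSemidef) : 0 ≤ P.trace := by
  rw [Matrix.trace]
  refine Finset.sum_nonneg fun i _ => ?_
  have h := hP.dotProduct_mulVec_nonneg (Pi.single i 1)
  simpa [dotProduct, Pi.single_apply, Finset.sum_ite_eq, Matrix.mulVec] using h

open scoped MatrixOrder in
/-- Trace of a product of PSD matrices is nonnegative. -/
lemma aux_trace_mul_nonneg {P Q : Mx} (hP : P.PosSemidef) (hQ : Q.PosSemidef) :
    0 ≤ (P * Q).trace := by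
  have h1 : P * Q = CFC.sqrt P * (CFC.sqrt P * Q) := by
    rw [← mul_assoc, CFC.sqrt_mul_sqrt_self P hP.nonneg]
  rw [h1, Matrix.trace_mul_comm]
  have h2 : CFC.sqrt P * Q * CFC.sqrt P = (CFC.sqrt P)ᴴ * Q * CFC.sqrt P := by
    rw [(CFC.sqrt_nonneg P).posSemidef.isHermitian.eq]
  rw [h2]
  exact aux_trace_nonneg (hQ.conjTranspose_mul_mul_same (CFC.sqrt P))

lemma aux_smul_psd {B : Mx} (hB : B.PosSemidef) {δ : ℝ} (hδ : 0 ≤ δ) :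
    ((δ : ℂ) • B).PosSemidef := by
  constructor
  · simp [Matrix.IsHermitian, Matrix.conjTranspose_smul, hB.1.eq, Complex.star_def,
      Complex.conj_ofReal]
  · exact (hB.smul (by exact_mod_cast Complex.zero_le_real.mpr hδ : (0:ℂ) ≤ (δ : ℂ))).2

/-- Cyclic rearrangement of the trace. -/
lemma aux_cyc (A B X : Mx) :
    (X * B * X * B * X * A).trace = ((B * X * B) * (X * A * X)).trace := by
  rw [show X * B * X * B * X * A = X * (B * X * B * X * A) by noncomm_ring,
    Matrix.trace_mul_comm,
    show (B * X * B * X * A) * X = (B * X * B) * (X * A * X) by noncomm_ring]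

/-- The key nonnegativity fact. -/
lemma aux_key_nonneg {A B M : Mx} (hA : A.PosSemidef) (hB : B.PosSemidef)
    (hM : M.PosDef) : 0 ≤ ((B * M⁻¹ * B) * (M⁻¹ * A * M⁻¹)).trace := by
  have hMinv : (M⁻¹ : Mx).PosSemidef := hM.inv.posSemidef
  have hP : (B * M⁻¹ * B).PosSemidef := by
    have := hMinv.conjTranspose_mul_mul_same B
    rwa [hB.1.eq] at this
  have hQ : (M⁻¹ * A * M⁻¹).PosSemidef := by
    have := hA.conjTranspose_mul_mul_same (M⁻¹ : Mx)
    rwa [hMinv.1.eq] at this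
  exact aux_trace_mul_nonneg hP hQ

/-- The continuous linear map `X ↦ (X * A).trace`, over `ℝ`. -/
noncomputable def traceMulCLM (A : Mx) : Mx →L[ℝ] ℂ :=
  LinearMap.toContinuousLinearMap
    (((Matrix.traceLinearMap (Fin n) ℂ ℂ).comp (LinearMap.mulRight ℂ A)).restrictScalars ℝ)

@[simp] lemma traceMulCLM_apply (A X : Mx) : traceMulCLM A X = (X * A).trace := rfl

lemma aux_hasDerivAt_line (B M : Mx) (δ : ℝ) :
    HasDerivAt (fun δ : ℝ => M + (δ : ℂ) • B) B δ := by
  have h : (fun δ : ℝ => M + (δ : ℂ) • B) = fun δ : ℝ => M + δ • B := by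
    funext δ; rw [Complex.coe_smul]
  rw [h]
  have := ((hasDerivAt_id δ).smul_const B).const_add M
  simp only [id_eq, one_smul] at this
  exact this

lemma aux_cont_line (B M : Mx) : Continuous (fun δ : ℝ => M + (δ : ℂ) • B) :=
  continuous_const.add ((Complex.continuous_ofReal).smul continuous_const)

lemma aux_isOpen_units (B M : Mx) : IsOpen {δ : ℝ | IsUnit (M + (δ : ℂ) • B)} :=
  Units.isOpen.preimage (aux_cont_line B M)

lemma aux_hasDerivAt_inv (B M : Mx) {δ : ℝ} (h : IsUnit (M + (δ : ℂ) • B)) :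
    HasDerivAt (fun δ : ℝ => Ring.inverse (M + (δ : ℂ) • B))
      (-((M + (δ : ℂ) • B)⁻¹ * B * (M + (δ : ℂ) • B)⁻¹)) δ := by
  obtain ⟨u, hu⟩ := h
  have hF := hasFDerivAt_ringInverse (𝕜 := ℝ) u
  rw [hu] at hF
  have hcomp := hF.comp_hasDerivAt δ (aux_hasDerivAt_line B M δ)
  have hval : ((↑u⁻¹ : Mx)) = (M + (δ : ℂ) • B)⁻¹ := by
    rw [Matrix.coe_units_inv, hu]
  simp [hval] at hcomp
  exact hcomp

lemma aux_first_deriv (A B M : Mx) {δ : ℝ} (h : IsUnit (M + (δ : ℂ) • B)) :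
    HasDerivAt (fun δ : ℝ => ((M + (δ : ℂ) • B)⁻¹ * A).trace)
      (-(((M + (δ : ℂ) • B)⁻¹ * B * (M + (δ : ℂ) • B)⁻¹ * A).trace)) δ := by
  have h1 := aux_hasDerivAt_inv B M h
  have h2 := (traceMulCLM A).hasFDerivAt.comp_hasDerivAt δ h1
  have heq : (fun δ : ℝ => traceMulCLM A (Ring.inverse (M + (δ : ℂ) • B)))
      = fun δ : ℝ => ((M + (δ : ℂ) • B)⁻¹ * A).trace := by
    funext x
    rw [traceMulCLM_apply, Matrix.nonsing_inv_eq_ringInverse]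
  rw [Function.comp_def] at h2
  rw [heq] at h2
  refine h2.congr_deriv ?_
  change Matrix.trace (_ * A) = _
  simp [Matrix.mul_assoc]

lemma aux_second_deriv (A B M : Mx) {δ : ℝ} (h : IsUnit (M + (δ : ℂ) • B)) :
    HasDerivAt (fun δ : ℝ => -(((M + (δ : ℂ) • B)⁻¹ * B * (M + (δ : ℂ) • B)⁻¹ * A).trace))
      (2 * (((M + (δ : ℂ) • B)⁻¹ * B * (M + (δ : ℂ) • B)⁻¹ * B * (M + (δ : ℂ) • B)⁻¹
        * A).trace)) δ := by
  set X := (M + (δ : ℂ) • B)⁻¹ with hX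
  have h1 := aux_hasDerivAt_inv B M h
  have hprod := (h1.mul_const B).mul h1
  have h2 := ((traceMulCLM A).hasFDerivAt.comp_hasDerivAt δ hprod).neg
  rw [Function.comp_def] at h2
  refine (h2.congr_deriv ?_).congr_of_eventuallyEq (Filter.Eventually.of_forall fun x => by
    show -((M + (x : ℂ) • B)⁻¹ * B * (M + (x : ℂ) • B)⁻¹ * A).trace = -Matrix.trace (_ * A)
    rw [Matrix.nonsing_inv_eq_ringInverse]
    rfl)
  change -Matrix.trace (_ * A) = _
  rw [← Matrix.nonsing_inv_eq_ringInverse, ← hX]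
  rw [show (-(X * B * X) * B * X + X * B * -(X * B * X)) * A
      = -(X * B * X * B * X * A) + -(X * B * (X * B * X) * A) by noncomm_ring]
  rw [Matrix.trace_add]
  rw [show X * B * (X * B * X) * A = X * B * X * B * X * A by noncomm_ring]
  rw [Matrix.trace_neg]
  ring

end Aux

theorem trace_inv_second_deriv_convex {n : ℕ} (A B M : Matrix (Fin n) (Fin n) ℂ)
    (hA : A.PosSemidef) (hB : B.PosSemidef) (hM : M.PosDef) :
    deriv (deriv (fun δ : ℝ => ((M + (δ : ℂ) • B)⁻¹ * A).trace)) 0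
      = 2 * ((B * M⁻¹ * B) * (M⁻¹ * A * M⁻¹)).trace ∧
    0 ≤ ((B * M⁻¹ * B) * (M⁻¹ * A * M⁻¹)).trace.re ∧
    ConvexOn ℝ (Set.Ici 0) (fun δ : ℝ => (((M + (δ : ℂ) • B)⁻¹ * A).trace).re) := by
  set f : ℝ → ℂ := fun δ : ℝ => ((M + (δ : ℂ) • B)⁻¹ * A).trace with hf
  set g : ℝ → ℂ := fun δ : ℝ =>
    -(((M + (δ : ℂ) • B)⁻¹ * B * (M + (δ : ℂ) • B)⁻¹ * A).trace) with hg
  -- positive definiteness of M + δ B for δ ≥ 0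
  have hPD : ∀ δ : ℝ, 0 ≤ δ → (M + (δ : ℂ) • B).PosDef := fun δ hδ =>
    hM.add_posSemidef (aux_smul_psd hB hδ)
  have hunit : ∀ δ : ℝ, 0 ≤ δ → IsUnit (M + (δ : ℂ) • B) := fun δ hδ => (hPD δ hδ).isUnit
  -- eventual equality of deriv f with g near any unit point
  have hev : ∀ δ : ℝ, IsUnit (M + (δ : ℂ) • B) → deriv f =ᶠ[nhds δ] g := by
    intro δ hδ
    filter_upwards [(aux_isOpen_units B M).mem_nhds hδ] with x hx
    exact (aux_first_deriv A B M hx).deriv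
  -- the second derivative at any unit point
  have hsecond : ∀ δ : ℝ, IsUnit (M + (δ : ℂ) • B) →
      deriv (deriv f) δ = 2 * (((M + (δ : ℂ) • B)⁻¹ * B * (M + (δ : ℂ) • B)⁻¹ * B
        * (M + (δ : ℂ) • B)⁻¹ * A).trace) := by
    intro δ hδ
    rw [(hev δ hδ).deriv_eq]
    exact (aux_second_deriv A B M hδ).deriv
  have hunit0 : IsUnit (M + ((0 : ℝ) : ℂ) • B) := hunit 0 le_rfl
  have hM0 : M + ((0 : ℝ) : ℂ) • B = M := by simp
  constructor
  · rw [hsecond 0 hunit0, hM0, aux_cyc A B M⁻¹]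
  constructor
  · have := aux_key_nonneg hA hB hM
    simpa using (Complex.le_def.mp this).1
  · -- convexity
    set fRe : ℝ → ℝ := fun δ => (f δ).re with hfRe
    set gRe : ℝ → ℝ := fun δ => (g δ).re with hgRe
    have hfRe_deriv : ∀ δ : ℝ, IsUnit (M + (δ : ℂ) • B) →
        HasDerivAt fRe ((g δ).re) δ := by
      intro δ hδ
      have h1 := aux_first_deriv A B M hδ
      have := Complex.reCLM.hasFDerivAt.comp_hasDerivAt δ h1
      exact this
    have hevRe : ∀ δ : ℝ, IsUnit (M + (δ : ℂ) • B) → deriv fRe =ᶠ[nhds δ] gRe := by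
      intro δ hδ
      filter_upwards [(aux_isOpen_units B M).mem_nhds hδ] with x hx
      exact (hfRe_deriv x hx).deriv
    have hgRe_deriv : ∀ δ : ℝ, IsUnit (M + (δ : ℂ) • B) →
        HasDerivAt gRe ((2 * (((M + (δ : ℂ) • B)⁻¹ * B * (M + (δ : ℂ) • B)⁻¹ * B
          * (M + (δ : ℂ) • B)⁻¹ * A).trace)).re) δ := by
      intro δ hδ
      have h1 := aux_second_deriv A B M hδ
      have := Complex.reCLM.hasFDerivAt.comp_hasDerivAt δ h1
      exact this
    have hint : interior (Set.Ici (0 : ℝ)) = Set.Ioi 0 := interior_Ici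
    refine convexOn_of_deriv2_nonneg (convex_Ici 0) ?_ ?_ ?_ ?_
    · intro δ hδ
      exact ((hfRe_deriv δ (hunit δ hδ)).differentiableAt.continuousAt).continuousWithinAt
    · intro δ hδ
      rw [hint] at hδ
      exact ((hfRe_deriv δ (hunit δ hδ.le)).differentiableAt).differentiableWithinAt
    · intro δ hδ
      rw [hint] at hδ
      have hu := hunit δ hδ.le
      have : DifferentiableAt ℝ gRe δ := (hgRe_deriv δ hu).differentiableAt
      exact (this.congr_of_eventuallyEq (hevRe δ hu)).differentiableWithinAt
    · intro δ hδ
      rw [hint] at hδ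
      have hu := hunit δ hδ.le
      have h2 : deriv^[2] fRe δ = deriv (deriv fRe) δ := rfl
      rw [h2, (hevRe δ hu).deriv_eq, (hgRe_deriv δ hu).deriv]
      have hPDδ := hPD δ hδ.le
      have := aux_key_nonneg hA hB hPDδ
      have hre := (Complex.le_def.mp this).1
      rw [← aux_cyc A B (M + (δ : ℂ) • B)⁻¹] at hre
      simpa using hre
end

section
/- Suppose A and B are n×n Hermitian positive semidefinite matrices such that A + B is positive definite, C is Hermitian, and z = (z_1, z_2) satisfies det(z_1 A + z_2 B + C + t_1 A + t_2 B) > 0 for all t_1, t_2 ≥ 0. Then the matrix M = z_1 A + z_2 B + C is positive definite. -/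
open ComplexOrder Matrix

lemma aux_posDef_conj {n : ℕ} {K S : Matrix (Fin n) (Fin n) ℂ} (hK : K.PosDef)
    (hS : IsUnit S.det) : (S * K * Sᴴ).PosDef := by
  refine posDef_iff_dotProduct_mulVec.mpr ⟨?_, fun x hx => ?_⟩
  · show (S * K * Sᴴ)ᴴ = _
    rw [conjTranspose_mul, conjTranspose_mul, conjTranspose_conjTranspose, hK.1.eq, mul_assoc]
  · have hSH : IsUnit (Sᴴ).det := by rwa [det_conjTranspose, isUnit_star]
    have hx' : Sᴴ *ᵥ x ≠ 0 := by
      intro h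
      exact hx ((mulVec_injective_iff_isUnit.2 ((isUnit_iff_isUnit_det _).mpr hSH)) (by simpa using h))
    have h2 := hK.dotProduct_mulVec_pos hx'
    have key : star x ⬝ᵥ (S * K * Sᴴ) *ᵥ x = star (Sᴴ *ᵥ x) ⬝ᵥ K *ᵥ (Sᴴ *ᵥ x) := by
      simp [star_mulVec, dotProduct_mulVec, mulVec_mulVec, mul_assoc]
    rw [key]; exact h2

theorem above_roots_posDef {n : ℕ} (A B Cm : Matrix (Fin n) (Fin n) ℂ)
    (hA : A.PosSemidef) (hB : B.PosSemidef) (hAB : (A + B).PosDef) (hC : Cm.IsHermitian)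
    (z1 z2 : ℝ)
    (habove : ∀ t1 t2 : ℝ, 0 ≤ t1 → 0 ≤ t2 →
      0 < ((((z1 + t1 : ℝ) : ℂ)) • A + (((z2 + t2 : ℝ) : ℂ)) • B + Cm).det.re) :
    ((z1 : ℂ) • A + (z2 : ℂ) • B + Cm).PosDef := by
  set M : Matrix (Fin n) (Fin n) ℂ := (z1 : ℂ) • A + (z2 : ℂ) • B + Cm with hMdef
  set P : Matrix (Fin n) (Fin n) ℂ := A + B with hPdef
  have hM : M.IsHermitian := by
    show Mᴴ = M
    rw [hMdef]
    simp [conjTranspose_add, conjTranspose_smul, hA.1.eq, hB.1.eq, hC.eq, Complex.star_def,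
      Complex.conj_ofReal]
  have hPsd := hAB.posSemidef
  open scoped MatrixOrder in
  set S : Matrix (Fin n) (Fin n) ℂ := CFC.sqrt P with hSdef
  open scoped MatrixOrder in
  have hSsd : S.PosSemidef := (CFC.sqrt_nonneg P).posSemidef
  have hSH : S.IsHermitian := hSsd.1
  open scoped MatrixOrder in
  have hSS : S * S = P := CFC.sqrt_mul_sqrt_self P hPsd.nonneg
  have hdetP : 0 < P.det := hAB.det_pos
  have hdS : S.det * S.det = P.det := by rw [← det_mul, hSS]
  have hdSne : S.det ≠ 0 := by
    intro h
    rw [h, mul_zero] at hdS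
    exact hdetP.ne' hdS.symm
  have hSunit : IsUnit S.det := isUnit_iff_ne_zero.2 hdSne
  set K : Matrix (Fin n) (Fin n) ℂ := S⁻¹ * M * S⁻¹ with hKdef
  have hSKS : S * K * S = M := by
    rw [hKdef]
    simp only [Matrix.mul_assoc]
    rw [Matrix.nonsing_inv_mul _ hSunit, Matrix.mul_one, ← Matrix.mul_assoc,
      Matrix.mul_nonsing_inv _ hSunit, Matrix.one_mul]
  have hKH : K.IsHermitian := by
    have hSi : (S⁻¹).IsHermitian := hSH.inv
    show Kᴴ = K
    rw [hKdef, conjTranspose_mul, conjTranspose_mul, hSi.eq, hM.eq, Matrix.mul_assoc]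
  set μ : Fin n → ℝ := hKH.eigenvalues with hμdef
  set U : Matrix (Fin n) (Fin n) ℂ := (hKH.eigenvectorUnitary : Matrix (Fin n) (Fin n) ℂ) with hUdef
  have hspec : K = U * diagonal (RCLike.ofReal ∘ μ) * star U := hKH.spectral_theorem
  have hUU : U * star U = 1 := (Matrix.mem_unitaryGroup_iff).mp hKH.eigenvectorUnitary.2
  have hdetKt : ∀ t : ℝ, (K + (t : ℂ) • 1).det = ∏ i, ((μ i + t : ℝ) : ℂ) := by
    intro t
    have h1 : K + (t : ℂ) • 1 = U * (diagonal fun i => ((μ i + t : ℝ) : ℂ)) * star U := by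
      have ht1 : (t : ℂ) • (1 : Matrix (Fin n) (Fin n) ℂ)
          = U * ((t : ℂ) • 1) * star U := by
        rw [Matrix.mul_smul, Matrix.mul_one, Matrix.smul_mul, hUU]
      rw [hspec, ht1, ← Matrix.add_mul, ← Matrix.mul_add]
      congr 2
      rw [smul_one_eq_diagonal, diagonal_add]
      funext i
      push_cast
      rfl
    have hU1 : U.det * (star U).det = 1 := by rw [← det_mul, hUU, det_one]
    rw [h1, det_mul, det_mul, det_diagonal]
    calc U.det * (∏ i, ((μ i + t : ℝ) : ℂ)) * (star U).det
        = (U.det * (star U).det) * ∏ i, ((μ i + t : ℝ) : ℂ) := by ring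
      _ = ∏ i, ((μ i + t : ℝ) : ℂ) := by rw [hU1, one_mul]
  have hPre : P.det = ((P.det.re : ℝ) : ℂ) := by
    have h := (Complex.lt_def.mp hdetP).2
    apply Complex.ext <;> simp [← h]
  have hPrepos : 0 < P.det.re := (Complex.lt_def.mp hdetP).1
  have hprod : ∀ t : ℝ, 0 ≤ t → 0 < ∏ i, (μ i + t) := by
    intro t ht
    have h0 := habove t t ht ht
    have hMt : (((z1 + t : ℝ) : ℂ)) • A + (((z2 + t : ℝ) : ℂ)) • B + Cm
        = S * (K + (t : ℂ) • 1) * S := by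
      have e2 : S * (K + (t : ℂ) • 1) * S = M + (t : ℂ) • P := by
        rw [Matrix.mul_add, Matrix.add_mul, hSKS, Matrix.mul_smul, Matrix.mul_one,
          Matrix.smul_mul, hSS]
      rw [e2, hMdef, hPdef]
      push_cast
      module
    rw [hMt] at h0
    have hdet2 : (S * (K + (t : ℂ) • 1) * S).det
        = ((P.det.re * ∏ i, (μ i + t) : ℝ) : ℂ) := by
      rw [det_mul, det_mul, hdetKt t]
      have : ∏ i, ((μ i + t : ℝ) : ℂ) = ((∏ i, (μ i + t) : ℝ) : ℂ) := by push_cast; rfl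
      rw [this]
      calc S.det * ((∏ i, (μ i + t) : ℝ) : ℂ) * S.det
          = (S.det * S.det) * ((∏ i, (μ i + t) : ℝ) : ℂ) := by ring
        _ = _ := by
            rw [hdS]
            conv_lhs => rw [hPre]
            push_cast
            ring
    rw [hdet2, Complex.ofReal_re] at h0
    by_contra hle
    push_neg at hle
    nlinarith
  have hμpos : ∀ i, 0 < μ i := by
    intro i
    by_contra hneg
    push_neg at hneg
    have h := hprod (-μ i) (by linarith)
    rw [Finset.prod_eq_zero (Finset.mem_univ i) (by ring)] at h
    exact lt_irrefl 0 h
  have hUdet : IsUnit U.det := by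
    apply IsUnit.of_mul_eq_one (star U).det
    rw [← det_mul, hUU, det_one]
  have hD : (diagonal (RCLike.ofReal ∘ μ) : Matrix (Fin n) (Fin n) ℂ).PosDef := by
    rw [posDef_diagonal_iff]
    intro i
    simpa using (hμpos i)
  have hKpd : K.PosDef := by
    rw [hspec]
    have h := aux_posDef_conj hD hUdet
    simpa [star_eq_conjTranspose] using h
  have hfin := aux_posDef_conj hKpd hSunit
  rw [hSH.eq] at hfin
  rwa [hSKS] at hfin
end

section
/- For a smooth function p with p(z) ≠ 0, and writing Φ^i = (∂_i p)/p, the following identity holds wherever Φ^j ≠ 1: the barrier function of p - ∂_j p in direction i equals Φ^i - (∂_j Φ^i)/(1 - Φ^j), i.e., ∂_i(p - ∂_j p)/(p - ∂_j p) = Φ^i_p - (∂_j Φ^i_p)/(1 - Φ^j_p). -/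
open MvPolynomial

lemma pderiv_comm' {m : ℕ} (i j : Fin m) (p : MvPolynomial (Fin m) ℝ) :
    pderiv i (pderiv j p) = pderiv j (pderiv i p) := by
  induction p using MvPolynomial.induction_on with
  | C a => simp
  | add q r hq hr => simp [hq, hr]
  | mul_X q k hq =>
      simp only [pderiv_mul, pderiv_X, Pi.single_apply, map_add, hq]
      split_ifs <;> simp [hq] <;> ring

theorem barrier_identity {m : ℕ} (p : MvPolynomial (Fin m) ℝ) (z : Fin m → ℝ) (i j : Fin m)
    (hp : eval z p ≠ 0) (hb : eval z (pderiv j p) / eval z p ≠ 1) :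
    eval z (pderiv i (p - pderiv j p)) / eval z (p - pderiv j p)
      = eval z (pderiv i p) / eval z p
        - (eval z (pderiv j (pderiv i p)) / eval z p
            - (eval z (pderiv i p) / eval z p) * (eval z (pderiv j p) / eval z p))
          / (1 - eval z (pderiv j p) / eval z p) := by
  have hcomm : pderiv i (pderiv j p) = pderiv j (pderiv i p) := pderiv_comm' i j p
  have hne : eval z p - eval z (pderiv j p) ≠ 0 := by
    intro h
    apply hb
    field_simp
    linarith
  rw [map_sub, map_sub, map_sub, hcomm]
  set a := eval z p
  set bi := eval z (pderiv i p)
  set bj := eval z (pderiv j p)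
  set c := eval z (pderiv j (pderiv i p))
  have h1 : 1 - bj / a ≠ 0 := sub_ne_zero.mpr (Ne.symm hb)
  field_simp
  ring
end

section
/- Suppose p(z_1,...,z_m) is real stable, z is above the roots of p, and δ > 0 satisfies Φ^j_p(z) ≤ 1 - 1/δ. Then for all i, Φ^i_{p - ∂_{z_j} p}(z + δe_j) ≤ Φ^i_p(z). -/
open MvPolynomial

/-- The barrier function Φ^i_p(z) = ∂_{z_i} p(z) / p(z). -/
noncomputable def barrierFn {m : ℕ} (p : MvPolynomial (Fin m) ℝ) (i : Fin m)
    (z : Fin m → ℝ) : ℝ :=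
  eval z (pderiv i p) / eval z p

/-- The partial derivative ∂_{z_j} Φ^i_p(z), written via polynomials. -/
noncomputable def dBarrierFn {m : ℕ} (p : MvPolynomial (Fin m) ℝ) (i j : Fin m)
    (z : Fin m → ℝ) : ℝ :=
  eval z (pderiv j (pderiv i p)) / eval z p - barrierFn p i z * barrierFn p j z

/-- Shift the j-th coordinate by δ: z + δ e_j. -/
def shiftCoord {m : ℕ} (z : Fin m → ℝ) (j : Fin m) (δ : ℝ) : Fin m → ℝ :=
  fun k => z k + if k = j then δ else 0

lemma shiftCoord_zero {m : ℕ} (w : Fin m → ℝ) (j : Fin m) : shiftCoord w j 0 = w := by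
  funext k; simp [shiftCoord]

/-- Restriction of a multivariate polynomial to a line in direction `e_j` through `w`. -/
noncomputable def lineP {m : ℕ} (w : Fin m → ℝ) (j : Fin m) :
    MvPolynomial (Fin m) ℝ →ₐ[ℝ] Polynomial ℝ :=
  aeval (fun k => Polynomial.C (w k) + if k = j then Polynomial.X else 0)

lemma lineP_eval {m : ℕ} (w : Fin m → ℝ) (j : Fin m) (q : MvPolynomial (Fin m) ℝ) (t : ℝ) :
    Polynomial.eval t (lineP w j q) = eval (shiftCoord w j t) q := by
  induction q using MvPolynomial.induction_on with
  | C a => simp [lineP]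
  | add p q hp hq => simp [map_add, hp, hq]
  | mul_X p n hp => by_cases h : n = j <;> simp [lineP, shiftCoord, h, *] at *

lemma lineP_derivative {m : ℕ} (w : Fin m → ℝ) (j : Fin m) (q : MvPolynomial (Fin m) ℝ) :
    Polynomial.derivative (lineP w j q) = lineP w j (pderiv j q) := by
  induction q using MvPolynomial.induction_on with
  | C a => simp [lineP]
  | add p q hp hq => simp [map_add, hp, hq]
  | mul_X p n hp => by_cases h : n = j <;>
      simp [map_mul, lineP, pderiv_mul, pderiv_X, Pi.single_apply, h, hp.symm] <;>
      simp [lineP] at hp <;> simp [hp] <;> ring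

lemma deriv_nonpos_of_le {f : ℝ → ℝ} {d : ℝ} (hf : HasDerivAt f d 0)
    (hle : ∀ t : ℝ, 0 ≤ t → f t ≤ f 0) : d ≤ 0 := by
  have h : HasDerivWithinAt f d (Set.Ioi 0) 0 := hf.hasDerivWithinAt
  have htend := hasDerivWithinAt_iff_tendsto_slope.mp h
  rw [Set.diff_singleton_eq_self (by simp)] at htend
  refine le_of_tendsto htend ?_
  filter_upwards [self_mem_nhdsWithin] with t ht
  have ht' : (0:ℝ) < t := ht
  rw [slope_def_field, div_eq_mul_inv]
  have h1 : f t - f 0 ≤ 0 := by have := hle t ht'.le; linarith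
  have h2 : (0:ℝ) ≤ (t - 0)⁻¹ := by rw [sub_zero]; exact inv_nonneg.mpr ht'.le
  exact mul_nonpos_of_nonpos_of_nonneg h1 h2

lemma hasDerivAt_barrier {m : ℕ} (p : MvPolynomial (Fin m) ℝ) (i j : Fin m)
    (w : Fin m → ℝ) (hw : eval w p ≠ 0) :
    HasDerivAt (fun t => barrierFn p i (shiftCoord w j t)) (dBarrierFn p i j w) 0 := by
  set A := lineP w j (pderiv i p) with hA
  set B := lineP w j p with hB
  have hB0 : Polynomial.eval 0 B ≠ 0 := by
    rw [hB, lineP_eval, shiftCoord_zero]; exact hw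
  have hAd : HasDerivAt (fun t => Polynomial.eval t A)
      (Polynomial.eval 0 (Polynomial.derivative A)) 0 := Polynomial.hasDerivAt A 0
  have hBd : HasDerivAt (fun t => Polynomial.eval t B)
      (Polynomial.eval 0 (Polynomial.derivative B)) 0 := Polynomial.hasDerivAt B 0
  have hdiv := hAd.div hBd hB0
  have hfun : (fun t => Polynomial.eval t A / Polynomial.eval t B)
      = fun t => barrierFn p i (shiftCoord w j t) := by
    funext t; rw [hA, hB, lineP_eval, lineP_eval]; rfl
  rw [show ((fun t => Polynomial.eval t A) / fun t => Polynomial.eval t B) = fun t => Polynomial.eval t A / Polynomial.eval t B from rfl, hfun] at hdiv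
  refine hdiv.congr_deriv ?_; symm
  rw [hA, hB, lineP_derivative, lineP_derivative]
  rw [lineP_eval, lineP_eval, lineP_eval, lineP_eval, shiftCoord_zero]
  rw [dBarrierFn, barrierFn, barrierFn, pderiv_comm']
  field_simp

theorem barrier_decreases {m : ℕ} (p : MvPolynomial (Fin m) ℝ)
    (hstable : ∀ ζ : Fin m → ℂ, (∀ i, 0 < (ζ i).im) → MvPolynomial.aeval ζ p ≠ 0)
    (z : Fin m → ℝ)
    (habove : ∀ t : Fin m → ℝ, (∀ k, 0 ≤ t k) → 0 < eval (z + t) p)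
    (j : Fin m) (δ : ℝ) (hδ : 0 < δ)
    (hbar : barrierFn p j z ≤ 1 - 1 / δ)
    (hmono : ∀ w : Fin m → ℝ, (∀ t : Fin m → ℝ, (∀ k, 0 ≤ t k) → 0 < eval (w + t) p) →
      ∀ (i j' : Fin m) (δ' : ℝ), 0 ≤ δ' →
        barrierFn p i (shiftCoord w j' δ') ≤ barrierFn p i w)
    (hconv : ∀ w : Fin m → ℝ, (∀ t : Fin m → ℝ, (∀ k, 0 ≤ t k) → 0 < eval (w + t) p) →
      ∀ (i j' : Fin m) (δ' : ℝ), 0 ≤ δ' →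
        barrierFn p i (shiftCoord w j' δ')
          ≤ barrierFn p i w + δ' * dBarrierFn p i j' (shiftCoord w j' δ')) :
    ∀ i : Fin m, barrierFn (p - pderiv j p) i (shiftCoord z j δ) ≤ barrierFn p i z := by
  intro i
  set w := shiftCoord z j δ with hw
  -- w is above the roots of p
  have hwabove : ∀ t : Fin m → ℝ, (∀ k, 0 ≤ t k) → 0 < eval (w + t) p := by
    intro t ht
    have : w + t = z + fun k => t k + if k = j then δ else 0 := by
      funext k; simp [hw, shiftCoord, Pi.add_apply]; ring
    rw [this]
    exact habove _ fun k => by have := ht k; split <;> [linarith; simpa]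
  have hP : 0 < eval w p := by
    have := hwabove 0 (fun k => le_refl 0)
    simpa using this
  set P := eval w p with hPdef
  set Q := eval w (pderiv j p) with hQdef
  set A := eval w (pderiv i p) with hAdef
  set M := eval w (pderiv j (pderiv i p)) with hMdef
  -- barrier at w in direction j is still ≤ 1 - 1/δ
  have hΦjw : Q / P ≤ 1 - 1 / δ := by
    have := hmono z habove j j δ hδ.le
    rw [← hw] at this
    calc Q / P = barrierFn p j w := rfl
      _ ≤ barrierFn p j z := this
      _ ≤ 1 - 1 / δ := hbar
  have hPQ : P / δ ≤ P - Q := by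
    have h1 : Q ≤ P * (1 - 1 / δ) := by
      have := mul_le_mul_of_nonneg_left hΦjw hP.le
      rwa [mul_div_cancel₀ _ (ne_of_gt hP)] at this
    have : P * (1 - 1 / δ) = P - P / δ := by ring
    linarith [h1.trans_eq this]
  have hPQpos : 0 < P - Q := lt_of_lt_of_le (by positivity) hPQ
  -- derivative of barrier is nonpositive at w
  set D := dBarrierFn p i j w with hD
  have hDle : D ≤ 0 := by
    refine deriv_nonpos_of_le (hasDerivAt_barrier p i j w (ne_of_gt hP)) ?_
    intro t ht
    have := hmono w hwabove i j t ht
    rwa [shiftCoord_zero]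
  -- convexity bound
  have hconv' : A / P ≤ barrierFn p i z + δ * D := by
    have := hconv z habove i j δ hδ.le
    rwa [← hw] at this
  -- ratio bound : P / (P - Q) ≤ δ
  have hratio : P / (P - Q) ≤ δ := by
    rw [div_le_iff₀ hPQpos]
    have := mul_le_mul_of_nonneg_left hPQ hδ.le
    calc P = δ * (P / δ) := by field_simp
      _ ≤ δ * (P - Q) := this
  -- key identity
  have hgoal_eq : barrierFn (p - pderiv j p) i w = A / P - D * (P / (P - Q)) := by
    have heval : eval w (p - pderiv j p) = P - Q := by simp [hPdef, hQdef]
    have heval2 : eval w (pderiv i (p - pderiv j p)) = A - M := by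
      simp [hAdef, hMdef, pderiv_comm']
    rw [barrierFn, heval, heval2, hD, dBarrierFn, barrierFn, barrierFn,
      ← hPdef, ← hQdef, ← hAdef, ← hMdef]
    field_simp
    ring
  -- combine
  have hstep : A / P - D * (P / (P - Q)) ≤ A / P - D * δ := by
    have h1 : (-D) * (P / (P - Q)) ≤ (-D) * δ :=
      mul_le_mul_of_nonneg_left hratio (by linarith)
    nlinarith
  rw [hgoal_eq]
  calc A / P - D * (P / (P - Q)) ≤ A / P - D * δ := hstep
    _ ≤ barrierFn p i z := by linarith
end
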